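/- Let q ∈ ℂ with q ≠ 0 and q² ≠ 1, set ω = q − q⁻¹, let m ≥ 1, let μ₁, …, μ_m ∈ ℂ be pairwise distinct, and fix 1 ≤ i₀ ≤ m. Let μ″ be the tuple obtained from μ by replacing μ_{i₀} with q⁻² μ_{i₀}, and assume the entries of μ″ are also pairwise distinct. Define p_n(ν) = Σ_{i=1}^{m} ν_iⁿ d_i(ν). Then for every n ≥ 1: p_n(μ) = p_n(μ″) + ω · n · (q⁻² μ_{i₀})ⁿ + ω² Σ_{s=1}^{n−1} s · (q⁻² μ_{i₀})^s · p_{n−s}(μ). -/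

import Mathlib

open Finset Polynomial

private lemma aux_root13 (r : Polynomial ℂ) (s : Finset ℂ) (hvan : ∀ x ∈ s, r.eval x = 0)
    (hdeg : r.natDegree ≤ s.card) (hc : r.coeff s.card = 0) : r = 0 := by
  rcases eq_or_ne r 0 with h | h
  · exact h
  · have hlt : r.natDegree < s.card := by
      rcases lt_or_eq_of_le hdeg with h' | h'
      · exact h'
      · exact absurd (Polynomial.leadingCoeff_eq_zero.mp
          (by rw [Polynomial.leadingCoeff, h']; exact hc)) h
    exact Polynomial.eq_zero_of_natDegree_lt_card_of_eval_eq_zero' r s hvan hlt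

private lemma aux_deg_step13 (r : Polynomial ℂ) (k : ℕ) (hdeg : r.natDegree ≤ k + 1)
    (hc : r.coeff (k + 1) = 0) : r.natDegree ≤ k := by
  rcases eq_or_ne r 0 with h | h
  · simp [h]
  · rcases lt_or_eq_of_le hdeg with h' | h'
    · exact Nat.lt_succ_iff.mp h'
    · exact absurd (Polynomial.leadingCoeff_eq_zero.mp
        (by rw [Polynomial.leadingCoeff, h']; exact hc)) h

noncomputable def Spoly13 (m : ℕ) (μ : Fin m → ℂ) (i₀ : Fin m) (qi c : ℂ) (e : ℕ) : Polynomial ℂ :=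
  ∑ i ∈ univ.erase i₀,
      Polynomial.C (qi * μ i ^ e * ∏ j ∈ (univ.erase i₀).erase i, ((μ i - c * μ j) / (μ i - μ j)))
        * (Polynomial.C (μ i) - Polynomial.C c * Polynomial.X)
        * ∏ j ∈ (univ.erase i₀).erase i, (Polynomial.X - Polynomial.C (μ j))

noncomputable def Ppoly13 (m : ℕ) (μ : Fin m → ℂ) (i₀ : Fin m) (qi c : ℂ) (e : ℕ) : Polynomial ℂ :=
  Polynomial.C qi * Polynomial.X ^ e
      * ∏ j ∈ univ.erase i₀, (Polynomial.X - Polynomial.C (c * μ j))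
    - Spoly13 m μ i₀ qi c e

lemma Spoly13_natDegree_le (m : ℕ) (μ : Fin m → ℂ) (i₀ : Fin m) (qi c : ℂ) (e : ℕ) :
    (Spoly13 m μ i₀ qi c e).natDegree ≤ (univ.erase i₀).card := by
  classical
  rw [Spoly13]
  refine le_trans (Polynomial.natDegree_sum_le _ _) ?_
  rw [Finset.fold_max_le]
  refine ⟨by omega, fun i hi => ?_⟩
  have h3 : ((univ.erase i₀).erase i).card = (univ.erase i₀).card - 1 :=
    Finset.card_erase_of_mem hi
  have hpos : 1 ≤ (univ.erase i₀).card := Finset.card_pos.mpr ⟨i, hi⟩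
  refine le_trans Polynomial.natDegree_mul_le ?_
  have h4 : (∏ j ∈ (univ.erase i₀).erase i, (Polynomial.X - Polynomial.C (μ j))).natDegree
      = ((univ.erase i₀).erase i).card := by
    have : (∏ j ∈ (univ.erase i₀).erase i, (Polynomial.X - Polynomial.C (μ j)))
        = Lagrange.nodal ((univ.erase i₀).erase i) μ := rfl
    rw [this, Lagrange.natDegree_nodal]
  have h5 : (Polynomial.C (qi * μ i ^ e * ∏ j ∈ (univ.erase i₀).erase i, ((μ i - c * μ j) / (μ i - μ j)))
      * (Polynomial.C (μ i) - Polynomial.C c * Polynomial.X) : Polynomial ℂ).natDegree ≤ 1 := by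
    refine le_trans Polynomial.natDegree_mul_le ?_
    have : (Polynomial.C (μ i) - Polynomial.C c * Polynomial.X : Polynomial ℂ).natDegree ≤ 1 := by
      refine le_trans (Polynomial.natDegree_sub_le _ _) (max_le (by simp) ?_)
      exact le_trans Polynomial.natDegree_mul_le (by simp)
    simp only [Polynomial.natDegree_C]
    omega
  omega

lemma Ppoly13_natDegree_le (m : ℕ) (μ : Fin m → ℂ) (i₀ : Fin m) (qi c : ℂ) (e : ℕ) :
    (Ppoly13 m μ i₀ qi c e).natDegree ≤ (univ.erase i₀).card + e := by
  classical
  rw [Ppoly13]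
  refine le_trans (Polynomial.natDegree_sub_le _ _) (max_le ?_ ?_)
  · refine le_trans (Polynomial.natDegree_mul_le) ?_
    have h1 : (Polynomial.C qi * Polynomial.X ^ e : Polynomial ℂ).natDegree ≤ e :=
      le_trans Polynomial.natDegree_mul_le (by simp)
    have h2 : (∏ j ∈ univ.erase i₀, (Polynomial.X - Polynomial.C (c * μ j))).natDegree
        = (univ.erase i₀).card := by
      have : (∏ j ∈ univ.erase i₀, (Polynomial.X - Polynomial.C (c * μ j)))
          = Lagrange.nodal (univ.erase i₀) (fun j => c * μ j) := rfl
      rw [this, Lagrange.natDegree_nodal]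
    omega
  · exact le_trans (Spoly13_natDegree_le m μ i₀ qi c e) (by omega)

lemma Ppoly13_eval (m : ℕ) (μ : Fin m → ℂ) (i₀ : Fin m) (qi c : ℂ) (e : ℕ)
    (t : ℂ) (ht : ∀ j ∈ univ.erase i₀, t ≠ μ j) :
    (∑ i, (Function.update μ i₀ t) i ^ e * (qi * ∏ j ∈ univ.erase i,
        ((Function.update μ i₀ t) i - c * (Function.update μ i₀ t) j)
          / ((Function.update μ i₀ t) i - (Function.update μ i₀ t) j)))
      * ∏ j ∈ univ.erase i₀, (t - μ j)
    = (Ppoly13 m μ i₀ qi c e).eval t := by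
  classical
  have hupd : ∀ j, j ≠ i₀ → Function.update μ i₀ t j = μ j :=
    fun j hj => Function.update_of_ne hj _ _
  rw [Ppoly13, Spoly13]
  simp only [eval_sub, eval_mul, eval_pow, eval_C, eval_X, eval_prod, eval_finset_sum]
  rw [← Finset.sum_erase_add _ _ (mem_univ i₀)]
  rw [add_mul, Finset.sum_mul]
  have hterm0 : (Function.update μ i₀ t) i₀ ^ e * (qi * ∏ j ∈ univ.erase i₀,
        ((Function.update μ i₀ t) i₀ - c * (Function.update μ i₀ t) j)
          / ((Function.update μ i₀ t) i₀ - (Function.update μ i₀ t) j))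
      * ∏ j ∈ univ.erase i₀, (t - μ j)
      = qi * t ^ e * ∏ j ∈ univ.erase i₀, (t - c * μ j) := by
    rw [Function.update_self]
    have h1 : ∏ j ∈ univ.erase i₀,
        (t - c * (Function.update μ i₀ t) j) / (t - (Function.update μ i₀ t) j)
        = ∏ j ∈ univ.erase i₀, (t - c * μ j) / (t - μ j) := by
      refine Finset.prod_congr rfl fun j hj => ?_
      rw [hupd j (Finset.ne_of_mem_erase hj)]
    rw [h1]
    have h2 : (∏ j ∈ univ.erase i₀, (t - c * μ j) / (t - μ j))
        * ∏ j ∈ univ.erase i₀, (t - μ j) = ∏ j ∈ univ.erase i₀, (t - c * μ j) := by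
      rw [← Finset.prod_mul_distrib]
      refine Finset.prod_congr rfl fun j hj => ?_
      exact div_mul_cancel₀ _ (sub_ne_zero.mpr (ht j hj))
    calc t ^ e * (qi * ∏ j ∈ univ.erase i₀, (t - c * μ j) / (t - μ j))
          * ∏ j ∈ univ.erase i₀, (t - μ j)
        = qi * t ^ e * ((∏ j ∈ univ.erase i₀, (t - c * μ j) / (t - μ j))
            * ∏ j ∈ univ.erase i₀, (t - μ j)) := by ring
      _ = qi * t ^ e * ∏ j ∈ univ.erase i₀, (t - c * μ j) := by rw [h2]
  rw [hterm0]
  have hterms : ∀ i ∈ univ.erase i₀,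
      (Function.update μ i₀ t) i ^ e * (qi * ∏ j ∈ univ.erase i,
        ((Function.update μ i₀ t) i - c * (Function.update μ i₀ t) j)
          / ((Function.update μ i₀ t) i - (Function.update μ i₀ t) j))
      * ∏ j ∈ univ.erase i₀, (t - μ j)
      = -((qi * μ i ^ e * ∏ j ∈ (univ.erase i₀).erase i, ((μ i - c * μ j) / (μ i - μ j)))
          * (μ i - c * t) * ∏ j ∈ (univ.erase i₀).erase i, (t - μ j)) := by
    intro i hi
    have hii₀ : i ≠ i₀ := Finset.ne_of_mem_erase hi
    have hupd_i : Function.update μ i₀ t i = μ i := hupd i hii₀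
    have hmem : i₀ ∈ univ.erase i := Finset.mem_erase.mpr ⟨Ne.symm hii₀, mem_univ i₀⟩
    have hprod : ∏ j ∈ univ.erase i,
        ((Function.update μ i₀ t) i - c * (Function.update μ i₀ t) j)
          / ((Function.update μ i₀ t) i - (Function.update μ i₀ t) j)
        = ((μ i - c * t) / (μ i - t))
          * ∏ j ∈ (univ.erase i₀).erase i, ((μ i - c * μ j) / (μ i - μ j)) := by
      rw [← Finset.mul_prod_erase _ _ hmem]
      congr 1
      · rw [hupd_i, Function.update_self]
      · rw [Finset.erase_right_comm]
        refine Finset.prod_congr rfl fun j hj => ?_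
        have hj₀ : j ≠ i₀ := Finset.ne_of_mem_erase
          (Finset.mem_of_mem_erase (by rwa [Finset.erase_right_comm] at hj) : j ∈ univ.erase i₀)
        rw [hupd_i, hupd j hj₀]
    have hN : ∏ j ∈ univ.erase i₀, (t - μ j)
        = (t - μ i) * ∏ j ∈ (univ.erase i₀).erase i, (t - μ j) :=
      (Finset.mul_prod_erase _ _ hi).symm
    have hti : μ i - t ≠ 0 := sub_ne_zero.mpr (Ne.symm (ht i hi))
    have hr : (μ i - c * t) / (μ i - t) * (t - μ i) = -(μ i - c * t) := by
      field_simp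
      ring
    rw [hprod, hN, hupd_i]
    linear_combination (μ i ^ e * qi
      * (∏ j ∈ (univ.erase i₀).erase i, ((μ i - c * μ j) / (μ i - μ j)))
      * (∏ j ∈ (univ.erase i₀).erase i, (t - μ j))) * hr
  rw [Finset.sum_congr rfl hterms, Finset.sum_neg_distrib]
  ring

lemma Ppoly13_root (m : ℕ) (μ : Fin m → ℂ) (hμ : Function.Injective μ) (i₀ : Fin m)
    (qi c : ℂ) (e : ℕ) (k : Fin m) (hk : k ∈ univ.erase i₀) :
    (Ppoly13 m μ i₀ qi c e).eval (μ k) = 0 := by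
  classical
  rw [Ppoly13, Spoly13]
  simp only [eval_sub, eval_mul, eval_pow, eval_C, eval_X, eval_prod, eval_finset_sum]
  rw [Finset.sum_eq_single_of_mem k hk ?side]
  case side =>
    intro i hi hik
    have hkmem : k ∈ (univ.erase i₀).erase i := Finset.mem_erase.mpr ⟨Ne.symm hik, hk⟩
    have hz : ∏ j ∈ (univ.erase i₀).erase i, (μ k - μ j) = 0 :=
      Finset.prod_eq_zero hkmem (by ring)
    rw [hz, mul_zero]
  · have hE : (∏ j ∈ (univ.erase i₀).erase k, ((μ k - c * μ j) / (μ k - μ j)))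
        * ∏ j ∈ (univ.erase i₀).erase k, (μ k - μ j)
        = ∏ j ∈ (univ.erase i₀).erase k, (μ k - c * μ j) := by
      rw [← Finset.prod_mul_distrib]
      refine Finset.prod_congr rfl fun j hj => ?_
      have hne : μ k ≠ μ j := fun h => (Finset.ne_of_mem_erase hj) (hμ h).symm
      exact div_mul_cancel₀ _ (sub_ne_zero.mpr hne)
    have hN : ∏ j ∈ univ.erase i₀, (μ k - c * μ j)
        = (μ k - c * μ k) * ∏ j ∈ (univ.erase i₀).erase k, (μ k - c * μ j) :=
      (Finset.mul_prod_erase _ _ hk).symm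
    linear_combination (qi * μ k ^ e) * hN
      + (qi * μ k ^ e * (μ k - c * μ k)) * hE.symm

lemma Ppoly13_eq_zero_aux (m : ℕ) (μ : Fin m → ℂ) (hμ : Function.Injective μ) (i₀ : Fin m)
    (r : Polynomial ℂ) (hdeg : r.natDegree ≤ (univ.erase i₀).card)
    (hcoeff : r.coeff (univ.erase i₀).card = 0)
    (hvan : ∀ k ∈ univ.erase i₀, r.eval (μ k) = 0) : r = 0 := by
  classical
  have hcard : ((univ.erase i₀).image μ).card = (univ.erase i₀).card :=
    Finset.card_image_of_injective _ hμ
  refine aux_root13 r ((univ.erase i₀).image μ) ?_ (by rwa [hcard]) (by rwa [hcard])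
  intro x hx
  obtain ⟨k, hk, rfl⟩ := Finset.mem_image.mp hx
  exact hvan k hk

lemma nodal_coeff13 (m : ℕ) (v : Fin m → ℂ) (i₀ : Fin m) :
    (Lagrange.nodal (univ.erase i₀) v).coeff (univ.erase i₀).card = 1 := by
  have h : (Lagrange.nodal (univ.erase i₀) v).Monic := Lagrange.nodal_monic
  have h2 : (Lagrange.nodal (univ.erase i₀) v).natDegree = (univ.erase i₀).card :=
    Lagrange.natDegree_nodal
  rw [← h2]
  exact h.coeff_natDegree

lemma nodal_eval_zero13 (m : ℕ) (μ : Fin m → ℂ) (i₀ : Fin m) (k : Fin m)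
    (hk : k ∈ univ.erase i₀) : (Lagrange.nodal (univ.erase i₀) μ).eval (μ k) = 0 := by
  rw [Lagrange.eval_nodal]
  exact Finset.prod_eq_zero hk (sub_self _)

lemma B0poly13 (m : ℕ) (μ : Fin m → ℂ) (hμ : Function.Injective μ) (i₀ : Fin m) (qi c : ℂ) :
    ∃ γ : ℂ, Ppoly13 m μ i₀ qi c 0
      = Polynomial.C γ * Lagrange.nodal (univ.erase i₀) μ := by
  set N := Lagrange.nodal (univ.erase i₀) μ with hN
  set γ := (Ppoly13 m μ i₀ qi c 0).coeff (univ.erase i₀).card with hγ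
  refine ⟨γ, sub_eq_zero.mp ?_⟩
  refine Ppoly13_eq_zero_aux m μ hμ i₀ _ ?_ ?_ ?_
  · refine le_trans (Polynomial.natDegree_sub_le _ _) (max_le ?_ ?_)
    · simpa using Ppoly13_natDegree_le m μ i₀ qi c 0
    · refine le_trans (Polynomial.natDegree_C_mul_le _ _) ?_
      rw [hN, Lagrange.natDegree_nodal]
  · rw [Polynomial.coeff_sub, Polynomial.coeff_C_mul, nodal_coeff13, mul_one, ← hγ, sub_self]
  · intro k hk
    rw [Polynomial.eval_sub, Ppoly13_root m μ hμ i₀ qi c 0 k hk, Polynomial.eval_mul,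
      nodal_eval_zero13 m μ i₀ k hk, mul_zero, sub_zero]

lemma B1poly13 (m : ℕ) (μ : Fin m → ℂ) (hμ : Function.Injective μ) (i₀ : Fin m) (qi c : ℂ) :
    ∃ γ : ℂ, Ppoly13 m μ i₀ qi c 1
      = (Polynomial.C qi * Polynomial.X + Polynomial.C γ)
          * Lagrange.nodal (univ.erase i₀) μ := by
  classical
  set N := Lagrange.nodal (univ.erase i₀) μ with hN
  set D := Ppoly13 m μ i₀ qi c 1 - Polynomial.C qi * Polynomial.X * N with hD
  have hNdeg : N.natDegree = (univ.erase i₀).card := Lagrange.natDegree_nodal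
  have hDdeg1 : D.natDegree ≤ (univ.erase i₀).card + 1 := by
    refine le_trans (Polynomial.natDegree_sub_le _ _) (max_le (Ppoly13_natDegree_le m μ i₀ qi c 1) ?_)
    refine le_trans Polynomial.natDegree_mul_le ?_
    have : (Polynomial.C qi * Polynomial.X : Polynomial ℂ).natDegree ≤ 1 :=
      le_trans (Polynomial.natDegree_C_mul_le _ _) (by simp)
    omega
  have hMcoeff : (∏ j ∈ univ.erase i₀, (Polynomial.X - Polynomial.C (c * μ j))).coeff
      (univ.erase i₀).card = 1 := nodal_coeff13 m (fun j => c * μ j) i₀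
  have hDcoeff : D.coeff ((univ.erase i₀).card + 1) = 0 := by
    rw [hD, Ppoly13]
    rw [Polynomial.coeff_sub, Polynomial.coeff_sub]
    have h1 : (Polynomial.C qi * Polynomial.X ^ 1
        * ∏ j ∈ univ.erase i₀, (Polynomial.X - Polynomial.C (c * μ j))).coeff
        ((univ.erase i₀).card + 1) = qi := by
      rw [pow_one, mul_assoc, Polynomial.coeff_C_mul, Polynomial.coeff_X_mul, hMcoeff, mul_one]
    have h2 : (Spoly13 m μ i₀ qi c 1).coeff ((univ.erase i₀).card + 1) = 0 :=
      Polynomial.coeff_eq_zero_of_natDegree_lt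
        (lt_of_le_of_lt (Spoly13_natDegree_le m μ i₀ qi c 1) (by omega))
    have h3 : (Polynomial.C qi * Polynomial.X * N).coeff ((univ.erase i₀).card + 1) = qi := by
      rw [mul_assoc, Polynomial.coeff_C_mul, Polynomial.coeff_X_mul, ← hNdeg]
      rw [(Lagrange.nodal_monic).coeff_natDegree, mul_one]
    rw [h1, h2, h3]
    ring
  have hDdeg : D.natDegree ≤ (univ.erase i₀).card := aux_deg_step13 D _ hDdeg1 hDcoeff
  set γ := D.coeff (univ.erase i₀).card with hγ
  have hr : D - Polynomial.C γ * N = 0 := by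
    refine Ppoly13_eq_zero_aux m μ hμ i₀ _ ?_ ?_ ?_
    · refine le_trans (Polynomial.natDegree_sub_le _ _) (max_le hDdeg ?_)
      exact le_trans (Polynomial.natDegree_C_mul_le _ _) (le_of_eq hNdeg)
    · rw [Polynomial.coeff_sub, Polynomial.coeff_C_mul, nodal_coeff13, mul_one, ← hγ, sub_self]
    · intro k hk
      rw [hD, hN]
      simp only [Polynomial.eval_sub, Polynomial.eval_mul,
        Ppoly13_root m μ hμ i₀ qi c 1 k hk, nodal_eval_zero13 m μ i₀ k hk]
      ring
  refine ⟨γ, ?_⟩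
  have hDe : D = Polynomial.C γ * N := sub_eq_zero.mp hr
  have := hD.symm.trans hDe
  rw [sub_eq_iff_eq_add] at this
  rw [this]
  ring

lemma phi_eval13 (m : ℕ) (μ : Fin m → ℂ) (i₀ : Fin m) (qi c : ℂ) (e : ℕ)
    (L : Polynomial ℂ)
    (hP : Ppoly13 m μ i₀ qi c e = L * Lagrange.nodal (univ.erase i₀) μ)
    (t : ℂ) (ht : ∀ j ∈ univ.erase i₀, t ≠ μ j) :
    (∑ i, (Function.update μ i₀ t) i ^ e * (qi * ∏ j ∈ univ.erase i,
        ((Function.update μ i₀ t) i - c * (Function.update μ i₀ t) j)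
          / ((Function.update μ i₀ t) i - (Function.update μ i₀ t) j)))
      = L.eval t := by
  have h1 := Ppoly13_eval m μ i₀ qi c e t ht
  rw [hP, Polynomial.eval_mul, Lagrange.eval_nodal] at h1
  have hPr : ∏ j ∈ univ.erase i₀, (t - μ j) ≠ 0 :=
    Finset.prod_ne_zero_iff.mpr fun j hj => sub_ne_zero.mpr (ht j hj)
  exact mul_right_cancel₀ hPr h1

lemma K13 (q : ℂ) (hq : q ≠ 0)
    (m : ℕ) (μ : Fin m → ℂ) (hμ : Function.Injective μ)
    (i₀ : Fin m) (μ'' : Fin m → ℂ)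
    (hμ'' : μ'' = Function.update μ i₀ (q⁻¹ ^ 2 * μ i₀))
    (hμ''inj : Function.Injective μ'')
    (p : ℕ → (Fin m → ℂ) → ℂ)
    (hp : ∀ (n : ℕ) (ν : Fin m → ℂ), p n ν = ∑ i, ν i ^ n *
      (q⁻¹ * ∏ j ∈ univ.erase i, (ν i - q⁻¹ ^ 2 * ν j) / (ν i - ν j)))
    (n : ℕ) :
    p (n+2) μ - ((1 + (q⁻¹ ^ 2) ^ 2) * μ i₀) * p (n+1) μ + (q⁻¹ ^ 2 * μ i₀) ^ 2 * p n μ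
    = p (n+2) μ'' - (2 * (q⁻¹ ^ 2 * μ i₀)) * p (n+1) μ''
        + (q⁻¹ ^ 2 * μ i₀) ^ 2 * p n μ'' := by
  classical
  rw [hp (n+2) μ, hp (n+1) μ, hp n μ, hp (n+2) μ'', hp (n+1) μ'', hp n μ'']
  rw [Finset.mul_sum, Finset.mul_sum, Finset.mul_sum, Finset.mul_sum,
    ← Finset.sum_sub_distrib, ← Finset.sum_add_distrib,
    ← Finset.sum_sub_distrib, ← Finset.sum_add_distrib]
  refine Finset.sum_congr rfl fun i _ => ?_
  have h0 : μ'' i₀ = q⁻¹ ^ 2 * μ i₀ := by rw [hμ'']; exact Function.update_self _ _ _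
  rcases eq_or_ne i i₀ with rfl | hii₀
  · rw [h0]
    ring
  · have h1 : μ'' i = μ i := by rw [hμ'']; exact Function.update_of_ne hii₀ _ _
    have hmem : i₀ ∈ univ.erase i := Finset.mem_erase.mpr ⟨Ne.symm hii₀, mem_univ i₀⟩
    have hsplit : ∏ j ∈ univ.erase i, (μ i - q⁻¹ ^ 2 * μ j) / (μ i - μ j)
        = ((μ i - q⁻¹ ^ 2 * μ i₀) / (μ i - μ i₀))
          * ∏ j ∈ (univ.erase i).erase i₀, (μ i - q⁻¹ ^ 2 * μ j) / (μ i - μ j) :=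
      (Finset.mul_prod_erase _ _ hmem).symm
    have hsplit'' : ∏ j ∈ univ.erase i, (μ'' i - q⁻¹ ^ 2 * μ'' j) / (μ'' i - μ'' j)
        = ((μ i - q⁻¹ ^ 2 * (q⁻¹ ^ 2 * μ i₀)) / (μ i - q⁻¹ ^ 2 * μ i₀))
          * ∏ j ∈ (univ.erase i).erase i₀, (μ i - q⁻¹ ^ 2 * μ j) / (μ i - μ j) := by
      rw [← Finset.mul_prod_erase _ _ hmem]
      congr 1
      · rw [h1, h0]
      · refine Finset.prod_congr rfl fun j hj => ?_
        have hj₀ : j ≠ i₀ := Finset.ne_of_mem_erase hj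
        have hjj : μ'' j = μ j := by rw [hμ'']; exact Function.update_of_ne hj₀ _ _
        rw [h1, hjj]
    have hne1 : μ i - μ i₀ ≠ 0 := sub_ne_zero.mpr fun h => hii₀ (hμ h)
    have hne2 : μ i - q⁻¹ ^ 2 * μ i₀ ≠ 0 := by
      refine sub_ne_zero.mpr ?_
      rw [← h1, ← h0]
      exact fun h => hii₀ (hμ''inj h)
    have h2 : (μ i - q⁻¹ ^ 2 * (q⁻¹ ^ 2 * μ i₀)) / (μ i - q⁻¹ ^ 2 * μ i₀)
          * (μ i - q⁻¹ ^ 2 * μ i₀) ^ 2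
        = (μ i - q⁻¹ ^ 2 * μ i₀) / (μ i - μ i₀)
          * ((μ i - μ i₀) * (μ i - (q⁻¹ ^ 2) ^ 2 * μ i₀)) := by
      have e1 : (μ i - q⁻¹ ^ 2 * (q⁻¹ ^ 2 * μ i₀)) / (μ i - q⁻¹ ^ 2 * μ i₀)
          * (μ i - q⁻¹ ^ 2 * μ i₀) = μ i - q⁻¹ ^ 2 * (q⁻¹ ^ 2 * μ i₀) :=
        div_mul_cancel₀ _ hne2
      have e2 : (μ i - q⁻¹ ^ 2 * μ i₀) / (μ i - μ i₀) * (μ i - μ i₀)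
          = μ i - q⁻¹ ^ 2 * μ i₀ := div_mul_cancel₀ _ hne1
      linear_combination (μ i - q⁻¹ ^ 2 * μ i₀) * e1
        - (μ i - (q⁻¹ ^ 2) ^ 2 * μ i₀) * e2
    rw [hsplit, hsplit'', h1]
    linear_combination (-(q⁻¹
      * (∏ j ∈ (univ.erase i).erase i₀, (μ i - q⁻¹ ^ 2 * μ j) / (μ i - μ j))
      * μ i ^ n)) * h2

noncomputable def Rsum13 (a : ℂ) (S : ℕ → ℂ) (n : ℕ) : ℂ :=
  ∑ j ∈ Finset.range (n - 1), ((j : ℂ) + 1) * a ^ (j + 1) * S (n - 1 - j)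

noncomputable def Usum13 (a : ℂ) (S : ℕ → ℂ) (k : ℕ) : ℂ :=
  ∑ j ∈ Finset.range k, a ^ (j + 1) * S (k - j)

lemma Usum13_rec (a : ℂ) (S : ℕ → ℂ) (k : ℕ) :
    Usum13 a S (k + 1) = a * S (k + 1) + a * Usum13 a S k := by
  rw [Usum13, Usum13, Finset.sum_range_succ', Finset.mul_sum]
  have h : ∀ j ∈ Finset.range k,
      a ^ (j + 1 + 1) * S (k + 1 - (j + 1)) = a * (a ^ (j + 1) * S (k - j)) := by
    intro j hj
    rw [Nat.succ_sub_succ]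
    ring
  rw [Finset.sum_congr rfl h]
  simp
  ring

lemma Rsum13_rec1 (a : ℂ) (S : ℕ → ℂ) (k : ℕ) :
    Rsum13 a S (k + 1) = a * Rsum13 a S k + Usum13 a S k := by
  cases k with
  | zero => simp [Rsum13, Usum13]
  | succ l =>
    rw [Rsum13, Rsum13, Usum13]
    simp only [Nat.add_sub_cancel]
    rw [Finset.sum_range_succ' (fun j => ((j : ℂ) + 1) * a ^ (j + 1) * S (l + 1 - j)) l,
      Finset.sum_range_succ' (fun j => a ^ (j + 1) * S (l + 1 - j)) l, Finset.mul_sum]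
    have h : ∀ j ∈ Finset.range l,
        ((↑(j + 1) : ℂ) + 1) * a ^ (j + 1 + 1) * S (l + 1 - (j + 1))
          = a * (((j : ℂ) + 1) * a ^ (j + 1) * S (l - j)) + a ^ (j + 1 + 1) * S (l + 1 - (j + 1)) := by
      intro j hj
      rw [Nat.succ_sub_succ]
      push_cast
      ring
    rw [Finset.sum_congr rfl h, Finset.sum_add_distrib]
    push_cast
    ring

lemma Rsum13_rec (a : ℂ) (S : ℕ → ℂ) (k : ℕ) :
    Rsum13 a S (k + 2) = 2 * a * Rsum13 a S (k + 1) - a ^ 2 * Rsum13 a S k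
      + a * S (k + 1) := by
  have r1 := Rsum13_rec1 a S (k + 1)
  have r2 := Rsum13_rec1 a S k
  have u := Usum13_rec a S k
  linear_combination r1 + u - a * r2

/-- recursion for the first-kind power sums under the shift
`μ_{i₀} ↦ q⁻²μ_{i₀}`:
`pₙ(μ) = pₙ(μ″) + ωn(q⁻²μ_{i₀})ⁿ + ω² Σ_{s=1}^{n−1} s (q⁻²μ_{i₀})^s p_{n−s}(μ)`. -/
theorem stmt_13 (q : ℂ) (hq : q ≠ 0) (hq2 : q ^ 2 ≠ 1) (ω : ℂ) (hω : ω = q - q⁻¹)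
    (m : ℕ) (hm : 1 ≤ m) (μ : Fin m → ℂ) (hμ : Function.Injective μ)
    (i₀ : Fin m) (μ'' : Fin m → ℂ)
    (hμ'' : μ'' = Function.update μ i₀ (q⁻¹ ^ 2 * μ i₀))
    (hμ''inj : Function.Injective μ'')
    (p : ℕ → (Fin m → ℂ) → ℂ)
    (hp : ∀ (n : ℕ) (ν : Fin m → ℂ), p n ν = ∑ i, ν i ^ n *
      (q⁻¹ * ∏ j ∈ univ.erase i, (ν i - q⁻¹ ^ 2 * ν j) / (ν i - ν j))) :
    ∀ n : ℕ, 1 ≤ n →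
      p n μ = p n μ'' + ω * (n : ℂ) * (q⁻¹ ^ 2 * μ i₀) ^ n
        + ω ^ 2 * ∑ s ∈ Icc 1 (n - 1), (s : ℂ) * (q⁻¹ ^ 2 * μ i₀) ^ s * p (n - s) μ := by
  subst hω
  have hqq : q * q⁻¹ = 1 := mul_inv_cancel₀ hq
  have ht1 : ∀ j ∈ univ.erase i₀, μ i₀ ≠ μ j :=
    fun j hj h => (Finset.ne_of_mem_erase hj) (hμ h).symm
  have ht2 : ∀ j ∈ univ.erase i₀, q⁻¹ ^ 2 * μ i₀ ≠ μ j := by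
    intro j hj h
    have h1 : μ'' i₀ = μ'' j := by
      rw [hμ'', Function.update_self, Function.update_of_ne (Finset.ne_of_mem_erase hj)]
      exact h
    exact (Finset.ne_of_mem_erase hj) (hμ''inj h1).symm
  obtain ⟨γ₀, hP0⟩ := B0poly13 m μ hμ i₀ q⁻¹ (q⁻¹ ^ 2)
  obtain ⟨γ₁, hP1⟩ := B1poly13 m μ hμ i₀ q⁻¹ (q⁻¹ ^ 2)
  have e10 := phi_eval13 m μ i₀ q⁻¹ (q⁻¹ ^ 2) 0 _ hP0 (μ i₀) ht1
  have e20 := phi_eval13 m μ i₀ q⁻¹ (q⁻¹ ^ 2) 0 _ hP0 (q⁻¹ ^ 2 * μ i₀) ht2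
  have e11 := phi_eval13 m μ i₀ q⁻¹ (q⁻¹ ^ 2) 1 _ hP1 (μ i₀) ht1
  have e21 := phi_eval13 m μ i₀ q⁻¹ (q⁻¹ ^ 2) 1 _ hP1 (q⁻¹ ^ 2 * μ i₀) ht2
  rw [Function.update_eq_self] at e10 e11
  rw [← hμ''] at e20 e21
  simp only [Polynomial.eval_add, Polynomial.eval_mul, Polynomial.eval_C,
    Polynomial.eval_X] at e10 e20 e11 e21
  have hp0 : p 0 μ = γ₀ := by rw [hp]; exact e10
  have hp0'' : p 0 μ'' = γ₀ := by rw [hp]; exact e20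
  have hp1 : p 1 μ = q⁻¹ * μ i₀ + γ₁ := by rw [hp]; exact e11
  have hp1'' : p 1 μ'' = q⁻¹ * (q⁻¹ ^ 2 * μ i₀) + γ₁ := by rw [hp]; exact e21
  have key : ∀ n : ℕ,
      (p n μ = p n μ'' + (q - q⁻¹) * (n : ℂ) * (q⁻¹ ^ 2 * μ i₀) ^ n
        + (q - q⁻¹) ^ 2 * Rsum13 (q⁻¹ ^ 2 * μ i₀) (fun t => p t μ) n)
      ∧ (p (n+1) μ = p (n+1) μ'' + (q - q⁻¹) * ((n+1 : ℕ) : ℂ) * (q⁻¹ ^ 2 * μ i₀) ^ (n+1)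
        + (q - q⁻¹) ^ 2 * Rsum13 (q⁻¹ ^ 2 * μ i₀) (fun t => p t μ) (n+1)) := by
    intro n
    induction n with
    | zero =>
      constructor
      · simp only [Rsum13, Nat.zero_sub, Finset.range_zero, Finset.sum_empty,
          Nat.cast_zero, pow_zero]
        linear_combination hp0 - hp0''
      · simp only [Rsum13, Nat.sub_self, Finset.range_zero, Finset.sum_empty]
        push_cast
        linear_combination hp1 - hp1'' - (q⁻¹ * μ i₀) * hqq
    | succ k ih =>
      refine ⟨ih.2, ?_⟩
      have hK := K13 q hq m μ hμ i₀ μ'' hμ'' hμ''inj p hp k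
      have hR := Rsum13_rec (q⁻¹ ^ 2 * μ i₀) (fun t => p t μ) k
      have h1 := ih.1
      have h2 := ih.2
      push_cast
      push_cast at h1 h2
      linear_combination hK + (2 * (q⁻¹ ^ 2 * μ i₀)) * h2 - (q⁻¹ ^ 2 * μ i₀) ^ 2 * h1
        - (q - q⁻¹) ^ 2 * hR
        + (p (k+1) μ * μ i₀ * (2 * q⁻¹ ^ 2 - 1 - q * q⁻¹)) * hqq
  intro n hn
  have hconv : ∑ s ∈ Icc 1 (n - 1), (s : ℂ) * (q⁻¹ ^ 2 * μ i₀) ^ s * p (n - s) μ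
      = Rsum13 (q⁻¹ ^ 2 * μ i₀) (fun t => p t μ) n := by
    rw [Rsum13, ← Finset.Ico_add_one_right_eq_Icc, Finset.sum_Ico_eq_sum_range]
    have hnn : n - 1 + 1 - 1 = n - 1 := by omega
    rw [hnn]
    refine Finset.sum_congr rfl fun j hj => ?_
    rw [Nat.sub_sub]
    push_cast
    ring
  rw [hconv]
  exact (key n).1
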